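/- arXiv:1903.06876 — 6 statements merged into one kernel-verified Lean document; each statement's English description precedes it below -/
import Mathlib

section
/- The error between the full and reduced transfer functions admits the factorization H(ω) - H_m(ω) = C(ωI - A)^{-1}(I - Q_m(ω))(ωI - A)(I - P_m(ω))(ωI - A)^{-1}B, where P_m(ω) = V_m(ωI_m - A_m)^{-1}W_m^T(ωI - A) and Q_m(ω) = (ωI - A)V_m(ωI_m - A_m)^{-1}W_m^T. -/
open Matrix

theorem aux_error_fact (n m p : ℕ)
    (S : Matrix (Fin n) (Fin n) ℝ) (Sm : Matrix (Fin m) (Fin m) ℝ)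
    (B : Matrix (Fin n) (Fin p) ℝ) (C : Matrix (Fin p) (Fin n) ℝ)
    (Vm Wm : Matrix (Fin n) (Fin m) ℝ)
    (hWSV : Wmᵀ * S * Vm = Sm)
    (hSinv : S⁻¹ * S = 1) (hSinv' : S * S⁻¹ = 1) (hSminv : Sm⁻¹ * Sm = 1) :
    C * S⁻¹ * B - C * Vm * Sm⁻¹ * (Wmᵀ * B) =
      C * S⁻¹ * (1 - S * Vm * Sm⁻¹ * Wmᵀ) * S * (1 - Vm * Sm⁻¹ * Wmᵀ * S) * S⁻¹ * B := by
  obtain ⟨T, hT⟩ : ∃ T, T = Vm * Sm⁻¹ * Wmᵀ := ⟨_, rfl⟩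
  have eQ : S * Vm * Sm⁻¹ * Wmᵀ = S * T := by simp only [hT, Matrix.mul_assoc]
  have eP : Vm * Sm⁻¹ * Wmᵀ * S = T * S := by rw [hT]
  have eC : C * Vm * Sm⁻¹ * (Wmᵀ * B) = C * (T * B) := by simp only [hT, Matrix.mul_assoc]
  rw [eQ, eP, eC]
  have hTST : T * (S * T) = T := by
    have h1 : T * (S * T) = Vm * (Sm⁻¹ * (Wmᵀ * (S * (Vm * (Sm⁻¹ * Wmᵀ))))) := by
      simp only [hT, Matrix.mul_assoc]
    have h2 : Wmᵀ * (S * (Vm * (Sm⁻¹ * Wmᵀ))) = Sm * (Sm⁻¹ * Wmᵀ) := by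
      rw [← hWSV]; simp only [Matrix.mul_assoc]
    rw [h1, h2, ← Matrix.mul_assoc Sm⁻¹ Sm, hSminv, Matrix.one_mul, hT, Matrix.mul_assoc]
  have r1 : (1 - T * S) * (S⁻¹ * B) = S⁻¹ * B - T * B := by
    rw [Matrix.sub_mul, Matrix.one_mul, Matrix.mul_assoc T S (S⁻¹ * B),
      ← Matrix.mul_assoc S S⁻¹ B, hSinv', Matrix.one_mul]
  have r2 : S * (S⁻¹ * B - T * B) = B - S * (T * B) := by
    rw [Matrix.mul_sub, ← Matrix.mul_assoc, hSinv', Matrix.one_mul]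
  have hTSTB : T * (S * (T * B)) = T * B := by
    rw [← Matrix.mul_assoc S T B, ← Matrix.mul_assoc T (S * T) B, hTST]
  have r3 : (1 - S * T) * (B - S * (T * B)) = B - S * (T * B) := by
    rw [Matrix.sub_mul, Matrix.one_mul, Matrix.mul_sub (S * T),
      Matrix.mul_assoc S T B, Matrix.mul_assoc S T (S * (T * B)), hTSTB,
      sub_self, sub_zero]
  have r4 : S⁻¹ * (B - S * (T * B)) = S⁻¹ * B - T * B := by
    rw [Matrix.mul_sub, ← Matrix.mul_assoc, hSinv, Matrix.one_mul]
  have main : C * S⁻¹ * (1 - S * T) * S * (1 - T * S) * S⁻¹ * B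
      = C * (S⁻¹ * ((1 - S * T) * (S * ((1 - T * S) * (S⁻¹ * B))))) := by
    simp only [Matrix.mul_assoc]
  rw [main, r1, r2, r3, r4, Matrix.mul_sub, ← Matrix.mul_assoc C T B,
    ← Matrix.mul_assoc C S⁻¹ B]

/-- Error factorization:
`H(ω) - H_m(ω) = C (ωI - A)⁻¹ (I - Q_m(ω)) (ωI - A) (I - P_m(ω)) (ωI - A)⁻¹ B`. -/
theorem error_factorization
    (n m p : ℕ)
    (A : Matrix (Fin n) (Fin n) ℝ) (B : Matrix (Fin n) (Fin p) ℝ)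
    (C : Matrix (Fin p) (Fin n) ℝ)
    (Vm Wm : Matrix (Fin n) (Fin m) ℝ)
    (hWV : Wmᵀ * Vm = 1)
    (Am : Matrix (Fin m) (Fin m) ℝ) (hAm : Am = Wmᵀ * A * Vm)
    (Bm : Matrix (Fin m) (Fin p) ℝ) (hBm : Bm = Wmᵀ * B)
    (Cm : Matrix (Fin p) (Fin m) ℝ) (hCm : Cm = C * Vm)
    (ω : ℝ)
    (hA : IsUnit (ω • (1 : Matrix (Fin n) (Fin n) ℝ) - A))
    (hAmω : IsUnit (ω • (1 : Matrix (Fin m) (Fin m) ℝ) - Am))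
    (Pm Qm : Matrix (Fin n) (Fin n) ℝ)
    (hPm : Pm = Vm * (ω • (1 : Matrix (Fin m) (Fin m) ℝ) - Am)⁻¹ * Wmᵀ *
        (ω • (1 : Matrix (Fin n) (Fin n) ℝ) - A))
    (hQm : Qm = (ω • (1 : Matrix (Fin n) (Fin n) ℝ) - A) * Vm *
        (ω • (1 : Matrix (Fin m) (Fin m) ℝ) - Am)⁻¹ * Wmᵀ) :
    C * (ω • (1 : Matrix (Fin n) (Fin n) ℝ) - A)⁻¹ * B -
        Cm * (ω • (1 : Matrix (Fin m) (Fin m) ℝ) - Am)⁻¹ * Bm =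
      C * (ω • (1 : Matrix (Fin n) (Fin n) ℝ) - A)⁻¹ * (1 - Qm) *
        (ω • (1 : Matrix (Fin n) (Fin n) ℝ) - A) * (1 - Pm) *
        (ω • (1 : Matrix (Fin n) (Fin n) ℝ) - A)⁻¹ * B := by
  have hWSV : Wmᵀ * (ω • (1 : Matrix (Fin n) (Fin n) ℝ) - A) * Vm
      = ω • (1 : Matrix (Fin m) (Fin m) ℝ) - Am := by
    rw [Matrix.mul_sub, Matrix.mul_smul, Matrix.mul_one, Matrix.sub_mul,
      Matrix.smul_mul, hWV, hAm]
  have hSinv := nonsing_inv_mul _ ((isUnit_iff_isUnit_det _).mp hA)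
  have hSinv' := mul_nonsing_inv _ ((isUnit_iff_isUnit_det _).mp hA)
  have hSminv := nonsing_inv_mul _ ((isUnit_iff_isUnit_det _).mp hAmω)
  rw [hQm, hPm, hCm, hBm]
  exact aux_error_fact n m p _ _ B C Vm Wm hWSV hSinv hSinv' hSminv
end

section
/- If (σI - A)^{-1}B r lies in the column span of V_m (for a vector r ∈ ℝ^p), then the reduced transfer function tangentially interpolates the original: H_m(σ) r = H(σ) r. -/
open Matrix

/-- If `(σI - A)⁻¹ B r` lies in the column span of `V_m`, then `H_m(σ) r = H(σ) r`. -/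
theorem tangential_interpolation_right
    (n m p : ℕ)
    (A : Matrix (Fin n) (Fin n) ℝ) (B : Matrix (Fin n) (Fin p) ℝ)
    (C : Matrix (Fin p) (Fin n) ℝ)
    (Vm Wm : Matrix (Fin n) (Fin m) ℝ)
    (hWV : Wmᵀ * Vm = 1)
    (hV : Function.Injective Vm.mulVecLin)
    (hW : Function.Injective Wm.mulVecLin)
    (Am : Matrix (Fin m) (Fin m) ℝ) (hAm : Am = Wmᵀ * A * Vm)
    (Bm : Matrix (Fin m) (Fin p) ℝ) (hBm : Bm = Wmᵀ * B)
    (Cm : Matrix (Fin p) (Fin m) ℝ) (hCm : Cm = C * Vm)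
    (σ : ℝ)
    (hA : IsUnit (σ • (1 : Matrix (Fin n) (Fin n) ℝ) - A))
    (hAmσ : IsUnit (σ • (1 : Matrix (Fin m) (Fin m) ℝ) - Am))
    (r : Fin p → ℝ)
    (hr : ((σ • (1 : Matrix (Fin n) (Fin n) ℝ) - A)⁻¹ * B).mulVec r ∈
        LinearMap.range Vm.mulVecLin) :
    (Cm * (σ • (1 : Matrix (Fin m) (Fin m) ℝ) - Am)⁻¹ * Bm).mulVec r =
      (C * (σ • (1 : Matrix (Fin n) (Fin n) ℝ) - A)⁻¹ * B).mulVec r := by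
  obtain ⟨z, hz⟩ := hr
  set S : Matrix (Fin n) (Fin n) ℝ := σ • (1 : Matrix (Fin n) (Fin n) ℝ) - A with hS
  set Sm : Matrix (Fin m) (Fin m) ℝ := σ • (1 : Matrix (Fin m) (Fin m) ℝ) - Am with hSm
  have hdet : IsUnit S.det := (Matrix.isUnit_iff_isUnit_det S).mp hA
  have hdetm : IsUnit Sm.det := (Matrix.isUnit_iff_isUnit_det Sm).mp hAmσ
  have hz' : Vm.mulVec z = (S⁻¹ * B).mulVec r := hz
  -- S (Vm z) = B r
  have h1 : S.mulVec (Vm.mulVec z) = B.mulVec r := by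
    rw [hz', Matrix.mulVec_mulVec, ← Matrix.mul_assoc,
      Matrix.mul_nonsing_inv _ hdet, Matrix.one_mul]
  -- Sm z = Bm r
  have hproj : Wmᵀ * S * Vm = Sm := by
    rw [hS, hSm, hAm, Matrix.mul_sub, Matrix.sub_mul, Matrix.mul_smul, Matrix.mul_one,
      Matrix.smul_mul, hWV]
  have h2 : Sm.mulVec z = Bm.mulVec r := by
    have := congrArg (fun v => Wmᵀ.mulVec v) h1
    simpa [Matrix.mulVec_mulVec, ← Matrix.mul_assoc, hproj, hBm] using this
  -- z = Sm⁻¹ Bm r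
  have h3 : z = Sm⁻¹.mulVec (Bm.mulVec r) := by
    rw [← h2, Matrix.mulVec_mulVec, Matrix.nonsing_inv_mul _ hdetm, Matrix.one_mulVec]
  calc (Cm * Sm⁻¹ * Bm).mulVec r
      = Cm.mulVec (Sm⁻¹.mulVec (Bm.mulVec r)) := by
        rw [← Matrix.mulVec_mulVec, ← Matrix.mulVec_mulVec]
    _ = (C * Vm).mulVec z := by rw [← h3, hCm]
    _ = C.mulVec (Vm.mulVec z) := by rw [← Matrix.mulVec_mulVec]
    _ = (C * S⁻¹ * B).mulVec r := by
        rw [hz', Matrix.mulVec_mulVec, Matrix.mul_assoc]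
end

section
/- If (μI - A)^{-T}C^T l lies in the column span of W_m (for a vector l ∈ ℝ^p), then l^T H_m(μ) = l^T H(μ). -/
open Matrix

/-- If `(μI - A)⁻ᵀ Cᵀ l` lies in the column span of `W_m`, then `lᵀ H_m(μ) = lᵀ H(μ)`. -/
theorem tangential_interpolation_left
    (n m p : ℕ)
    (A : Matrix (Fin n) (Fin n) ℝ) (B : Matrix (Fin n) (Fin p) ℝ)
    (C : Matrix (Fin p) (Fin n) ℝ)
    (Vm Wm : Matrix (Fin n) (Fin m) ℝ)
    (hWV : Wmᵀ * Vm = 1)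
    (hV : Function.Injective Vm.mulVecLin)
    (hW : Function.Injective Wm.mulVecLin)
    (Am : Matrix (Fin m) (Fin m) ℝ) (hAm : Am = Wmᵀ * A * Vm)
    (Bm : Matrix (Fin m) (Fin p) ℝ) (hBm : Bm = Wmᵀ * B)
    (Cm : Matrix (Fin p) (Fin m) ℝ) (hCm : Cm = C * Vm)
    (μ : ℝ)
    (hA : IsUnit (μ • (1 : Matrix (Fin n) (Fin n) ℝ) - A))
    (hAmμ : IsUnit (μ • (1 : Matrix (Fin m) (Fin m) ℝ) - Am))
    (l : Fin p → ℝ)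
    (hl : (((μ • (1 : Matrix (Fin n) (Fin n) ℝ) - A)ᵀ)⁻¹ * Cᵀ).mulVec l ∈
        LinearMap.range Wm.mulVecLin) :
    l ᵥ* (Cm * (μ • (1 : Matrix (Fin m) (Fin m) ℝ) - Am)⁻¹ * Bm) =
      l ᵥ* (C * (μ • (1 : Matrix (Fin n) (Fin n) ℝ) - A)⁻¹ * B) := by
  obtain ⟨x, hx⟩ := hl
  set S : Matrix (Fin n) (Fin n) ℝ := μ • 1 - A with hS
  set Sm : Matrix (Fin m) (Fin m) ℝ := μ • 1 - Am with hSm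
  have hdet : IsUnit S.det := (Matrix.isUnit_iff_isUnit_det _).mp hA
  have hdetT : IsUnit Sᵀ.det := by rwa [Matrix.det_transpose]
  have hdetm : IsUnit Sm.det := (Matrix.isUnit_iff_isUnit_det _).mp hAmμ
  have hx' : Wm.mulVec x = ((Sᵀ)⁻¹ * Cᵀ).mulVec l := hx
  have key : Cᵀ.mulVec l = Sᵀ.mulVec (Wm.mulVec x) := by
    rw [hx', Matrix.mulVec_mulVec, ← Matrix.mul_assoc,
      Matrix.mul_nonsing_inv _ hdetT, Matrix.one_mul]
  have htr : (Wmᵀ * S)ᵀ = Sᵀ * Wm := by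
    rw [Matrix.transpose_mul, Matrix.transpose_transpose]
  have hlC : l ᵥ* C = x ᵥ* (Wmᵀ * S) := by
    rw [← Matrix.mulVec_transpose C l, key, Matrix.mulVec_mulVec, ← htr,
      Matrix.mulVec_transpose]
  have hWS : Wmᵀ * S * Vm = Sm := by
    rw [hS, hSm, hAm, Matrix.mul_sub, Matrix.sub_mul, Matrix.mul_smul,
      Matrix.mul_one, Matrix.smul_mul, hWV, Matrix.mul_assoc]
  have h3 : l ᵥ* Cm = x ᵥ* Sm := by
    rw [hCm, ← Matrix.vecMul_vecMul, hlC, Matrix.vecMul_vecMul, hWS]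
  have h4 : x ᵥ* Sm ᵥ* Sm⁻¹ = x := by
    rw [Matrix.vecMul_vecMul, Matrix.mul_nonsing_inv _ hdetm, Matrix.vecMul_one]
  have h5 : l ᵥ* C ᵥ* S⁻¹ = x ᵥ* Wmᵀ := by
    rw [hlC, Matrix.vecMul_vecMul, Matrix.mul_assoc,
      Matrix.mul_nonsing_inv _ hdet, Matrix.mul_one]
  simp only [← Matrix.vecMul_vecMul]
  rw [h3, h4, h5, Matrix.vecMul_vecMul, ← hBm]
end

section
/- If for some σ both (σI - A)^{-1}B r ∈ Range(V_m) and (σI - A)^{-T}C^T l ∈ Range(W_m), then in addition to the value interpolation l^T H_m(σ) r = l^T H(σ) r, the derivatives also match: l^T H_m'(σ) r = l^T H'(σ) r. -/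
open Matrix

attribute [local instance] Matrix.linftyOpNormedRing Matrix.linftyOpNormedAlgebra

private theorem aux_dotProduct_mulVec {k q : ℕ} (M : Matrix (Fin q) (Fin k) ℝ)
    (v : Fin q → ℝ) (w : Fin k → ℝ) :
    v ⬝ᵥ M.mulVec w = (Mᵀ.mulVec v) ⬝ᵥ w := by
  rw [Matrix.dotProduct_mulVec, Matrix.mulVec_transpose]

private theorem aux_hasDerivAt (k q : ℕ) (A : Matrix (Fin k) (Fin k) ℝ)
    (C : Matrix (Fin q) (Fin k) ℝ) (B : Matrix (Fin k) (Fin q) ℝ) (l r : Fin q → ℝ)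
    (σ : ℝ) (hA : IsUnit (σ • (1 : Matrix (Fin k) (Fin k) ℝ) - A)) :
    HasDerivAt (fun ω => l ⬝ᵥ (C * (ω • (1 : Matrix (Fin k) (Fin k) ℝ) - A)⁻¹ * B).mulVec r)
      (-(l ⬝ᵥ (C * ((σ • (1 : Matrix (Fin k) (Fin k) ℝ) - A)⁻¹ *
          (σ • (1 : Matrix (Fin k) (Fin k) ℝ) - A)⁻¹) * B).mulVec r)) σ := by
  obtain ⟨u, hu⟩ := hA
  have hE : HasDerivAt (fun ω : ℝ => ω • (1 : Matrix (Fin k) (Fin k) ℝ) - A)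
      (1 : Matrix (Fin k) (Fin k) ℝ) σ := by
    exact (((hasDerivAt_id σ).smul_const (1 : Matrix (Fin k) (Fin k) ℝ)).sub_const A).congr_deriv (one_smul _ _)
  have hinv : HasDerivAt (fun ω : ℝ => (ω • (1 : Matrix (Fin k) (Fin k) ℝ) - A)⁻¹)
      (-((σ • (1 : Matrix (Fin k) (Fin k) ℝ) - A)⁻¹ *
         (σ • (1 : Matrix (Fin k) (Fin k) ℝ) - A)⁻¹)) σ := by
    have h1 := (hasFDerivAt_ringInverse (𝕜 := ℝ) u)
    rw [hu] at h1
    have h2 := h1.comp_hasDerivAt σ hE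
    have h3 : (fun ω : ℝ => Ring.inverse (ω • (1 : Matrix (Fin k) (Fin k) ℝ) - A)) =
        fun ω : ℝ => (ω • (1 : Matrix (Fin k) (Fin k) ℝ) - A)⁻¹ := by
      funext ω; rw [Matrix.nonsing_inv_eq_ringInverse]
    rw [Function.comp_def, h3] at h2
    refine h2.congr_deriv ?_
    have hcoe : ((u⁻¹ : (Matrix (Fin k) (Fin k) ℝ)ˣ) : Matrix (Fin k) (Fin k) ℝ) =
        (σ • (1 : Matrix (Fin k) (Fin k) ℝ) - A)⁻¹ := by
      rw [← hu, Matrix.coe_units_inv]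
    simp [hcoe, ContinuousLinearMap.mulLeftRight_apply]
  let φ : Matrix (Fin k) (Fin k) ℝ →ₗ[ℝ] ℝ :=
    { toFun := fun M => l ⬝ᵥ (C * M * B).mulVec r
      map_add' := fun M N => by
        simp [Matrix.mul_add, Matrix.add_mul, Matrix.add_mulVec, dotProduct_add]
      map_smul' := fun c M => by
        simp [Matrix.mul_smul, Matrix.smul_mul, Matrix.smul_mulVec, dotProduct_smul,
          smul_eq_mul] }
  have hφ := (LinearMap.toContinuousLinearMap φ).hasFDerivAt.comp_hasDerivAt σ hinv
  exact hφ.congr_deriv ((congrFun (LinearMap.coe_toContinuousLinearMap' φ) _).trans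
    (by simp [φ, Matrix.neg_mulVec, dotProduct_neg]))

/-- If both `(σI - A)⁻¹ B r ∈ Range(V_m)` and `(σI - A)⁻ᵀ Cᵀ l ∈ Range(W_m)`, then
`lᵀ H_m(σ) r = lᵀ H(σ) r` and the derivatives match: `lᵀ H_m'(σ) r = lᵀ H'(σ) r`. -/
theorem tangential_hermite_interpolation
    (n m p : ℕ)
    (A : Matrix (Fin n) (Fin n) ℝ) (B : Matrix (Fin n) (Fin p) ℝ)
    (C : Matrix (Fin p) (Fin n) ℝ)
    (Vm Wm : Matrix (Fin n) (Fin m) ℝ)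
    (hWV : Wmᵀ * Vm = 1)
    (hV : Function.Injective Vm.mulVecLin)
    (hW : Function.Injective Wm.mulVecLin)
    (Am : Matrix (Fin m) (Fin m) ℝ) (hAm : Am = Wmᵀ * A * Vm)
    (Bm : Matrix (Fin m) (Fin p) ℝ) (hBm : Bm = Wmᵀ * B)
    (Cm : Matrix (Fin p) (Fin m) ℝ) (hCm : Cm = C * Vm)
    (σ : ℝ)
    (hA : IsUnit (σ • (1 : Matrix (Fin n) (Fin n) ℝ) - A))
    (hAmσ : IsUnit (σ • (1 : Matrix (Fin m) (Fin m) ℝ) - Am))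
    (r l : Fin p → ℝ)
    (hr : ((σ • (1 : Matrix (Fin n) (Fin n) ℝ) - A)⁻¹ * B).mulVec r ∈
        LinearMap.range Vm.mulVecLin)
    (hl : (((σ • (1 : Matrix (Fin n) (Fin n) ℝ) - A)ᵀ)⁻¹ * Cᵀ).mulVec l ∈
        LinearMap.range Wm.mulVecLin)
    (h hm : ℝ → ℝ)
    (hh : ∀ ω : ℝ, h ω = l ⬝ᵥ (C * (ω • (1 : Matrix (Fin n) (Fin n) ℝ) - A)⁻¹ * B).mulVec r)
    (hhm : ∀ ω : ℝ,
      hm ω = l ⬝ᵥ (Cm * (ω • (1 : Matrix (Fin m) (Fin m) ℝ) - Am)⁻¹ * Bm).mulVec r) :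
    hm σ = h σ ∧ deriv hm σ = deriv h σ := by
  set E : Matrix (Fin n) (Fin n) ℝ := σ • (1 : Matrix (Fin n) (Fin n) ℝ) - A with hE
  set Em : Matrix (Fin m) (Fin m) ℝ := σ • (1 : Matrix (Fin m) (Fin m) ℝ) - Am with hEm
  have hdetE : IsUnit E.det := (Matrix.isUnit_iff_isUnit_det E).mp hA
  have hdetEm : IsUnit Em.det := (Matrix.isUnit_iff_isUnit_det Em).mp hAmσ
  have hEEinv : E * E⁻¹ = 1 := Matrix.mul_nonsing_inv E hdetE
  have hEinvE : E⁻¹ * E = 1 := Matrix.nonsing_inv_mul E hdetE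
  have hEmEminv : Em * Em⁻¹ = 1 := Matrix.mul_nonsing_inv Em hdetEm
  have hEminvEm : Em⁻¹ * Em = 1 := Matrix.nonsing_inv_mul Em hdetEm
  have hEmWEV : Em = Wmᵀ * E * Vm := by
    rw [hEm, hE, hAm, Matrix.mul_sub, Matrix.sub_mul]
    congr 1
    rw [Matrix.mul_smul, Matrix.mul_one, Matrix.smul_mul, hWV]
  obtain ⟨v, hv⟩ := hr
  obtain ⟨w, hw⟩ := hl
  rw [Matrix.mulVecLin_apply] at hv hw
  -- x and y
  set x : Fin n → ℝ := (E⁻¹ * B).mulVec r with hx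
  set y : Fin n → ℝ := ((Eᵀ)⁻¹ * Cᵀ).mulVec l with hy
  have hEx : E.mulVec x = B.mulVec r := by
    rw [hx, Matrix.mulVec_mulVec, ← Matrix.mul_assoc, hEEinv, Matrix.one_mul]
  have hEty : Eᵀ.mulVec y = Cᵀ.mulVec l := by
    have : Eᵀ * Eᵀ⁻¹ = 1 := by
      rw [← Matrix.transpose_nonsing_inv, ← Matrix.transpose_mul, hEinvE, Matrix.transpose_one]
    rw [hy, Matrix.mulVec_mulVec, ← Matrix.mul_assoc, this, Matrix.one_mul]
  -- reduced solutions
  have hEmv : Em.mulVec v = Bm.mulVec r := by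
    rw [hEmWEV, hBm, ← Matrix.mulVec_mulVec, ← Matrix.mulVec_mulVec, hv, hEx,
      Matrix.mulVec_mulVec]
  have hEmtw : Emᵀ.mulVec w = Cmᵀ.mulVec l := by
    have hEmt : Emᵀ = Vmᵀ * Eᵀ * Wm := by
      rw [hEmWEV, Matrix.transpose_mul, Matrix.transpose_mul, Matrix.transpose_transpose,
        Matrix.mul_assoc]
    rw [hEmt, hCm, Matrix.transpose_mul, ← Matrix.mulVec_mulVec, ← Matrix.mulVec_mulVec, hw,
      hEty, Matrix.mulVec_mulVec]
  have hvEq : Em⁻¹.mulVec (Bm.mulVec r) = v := by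
    rw [← hEmv, Matrix.mulVec_mulVec, hEminvEm, Matrix.one_mulVec]
  have hwEq : (Emᵀ)⁻¹.mulVec (Cmᵀ.mulVec l) = w := by
    have : Emᵀ⁻¹ * Emᵀ = 1 := by
      rw [← Matrix.transpose_nonsing_inv, ← Matrix.transpose_mul, hEmEminv, Matrix.transpose_one]
    rw [← hEmtw, Matrix.mulVec_mulVec, this, Matrix.one_mulVec]
  -- Wmᵀ Vm v = v (vector form)
  have hWVvec : ∀ z : Fin m → ℝ, Wmᵀ.mulVec (Vm.mulVec z) = z := fun z => by
    rw [Matrix.mulVec_mulVec, hWV, Matrix.one_mulVec]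
  have hVW : Vmᵀ * Wm = 1 := by
    have := congrArg Matrix.transpose hWV
    simpa using this
  -- value interpolation
  have hmσ : hm σ = l ⬝ᵥ C.mulVec x := by
    rw [hhm σ, ← hEm, Matrix.mul_assoc, ← Matrix.mulVec_mulVec, ← Matrix.mulVec_mulVec, hvEq,
      hCm, ← Matrix.mulVec_mulVec, hv]
  have hσ' : h σ = l ⬝ᵥ C.mulVec x := by
    rw [hh σ, ← hE, Matrix.mul_assoc, ← Matrix.mulVec_mulVec, ← hx]
  refine ⟨hmσ.trans hσ'.symm, ?_⟩
  -- derivatives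
  have hdh := aux_hasDerivAt n p A C B l r σ hA
  have hdhm := aux_hasDerivAt m p Am Cm Bm l r σ hAmσ
  have hfun : h = fun ω => l ⬝ᵥ (C * (ω • (1 : Matrix (Fin n) (Fin n) ℝ) - A)⁻¹ * B).mulVec r :=
    funext hh
  have hfunm : hm = fun ω =>
      l ⬝ᵥ (Cm * (ω • (1 : Matrix (Fin m) (Fin m) ℝ) - Am)⁻¹ * Bm).mulVec r := funext hhm
  rw [hfun, hfunm, hdh.deriv, hdhm.deriv, ← hE, ← hEm]
  have hbig : l ⬝ᵥ (C * (E⁻¹ * E⁻¹) * B).mulVec r = w ⬝ᵥ v := by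
    have e1 : (C * (E⁻¹ * E⁻¹) * B).mulVec r = C.mulVec (E⁻¹.mulVec x) := by
      simp [hx, Matrix.mulVec_mulVec, Matrix.mul_assoc]
    rw [e1, aux_dotProduct_mulVec C, ← hEty, ← aux_dotProduct_mulVec E y,
      Matrix.mulVec_mulVec, hEEinv, Matrix.one_mulVec, ← hv, ← hw,
      aux_dotProduct_mulVec Vm, Matrix.mulVec_mulVec, hVW, Matrix.one_mulVec]
  have hsmall : l ⬝ᵥ (Cm * (Em⁻¹ * Em⁻¹) * Bm).mulVec r = w ⬝ᵥ v := by
    have e1 : (Cm * (Em⁻¹ * Em⁻¹) * Bm).mulVec r = Cm.mulVec (Em⁻¹.mulVec v) := by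
      rw [← hvEq]
      simp [Matrix.mulVec_mulVec, Matrix.mul_assoc]
    rw [e1, aux_dotProduct_mulVec Cm, ← hEmtw, ← aux_dotProduct_mulVec Em w,
      Matrix.mulVec_mulVec, hEmEminv, Matrix.one_mulVec]
  rw [hbig, hsmall]
end

section
/- For matrices of resolvent directions: if T_{m+1} = V_{m+1} G_{m+1} where T_{m+1} = [(σ_1 I - A)^{-1}BR_1, ..., (σ_{m+1} I - A)^{-1}BR_{m+1}], R_{m+1} = [R_1, ..., R_{m+1}], and D̃^{(1)}_{m+1} = Diag(σ_1,...,σ_{m+1}) ⊗ I_s, then A V_{m+1} = (V_{m+1} G_{m+1} D̃^{(1)}_{m+1} - B R_{m+1}) G_{m+1}^{-1}. -/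
open Matrix

/-- If `T_{m+1} = V_{m+1} G_{m+1}` where `T_{m+1}` collects the tangential resolvent
directions `(σ_j I - A)⁻¹ B R_j`, then
`A V_{m+1} = (V_{m+1} G_{m+1} D̃ - B 𝓡) G_{m+1}⁻¹` with `D̃ = Diag(σ_j) ⊗ I_s`. -/
theorem lanczos_relation
    (n p s m : ℕ)
    (A : Matrix (Fin n) (Fin n) ℝ) (B : Matrix (Fin n) (Fin p) ℝ)
    (σ : Fin (m + 1) → ℝ)
    (hσ : ∀ j, IsUnit (σ j • (1 : Matrix (Fin n) (Fin n) ℝ) - A))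
    (R : Fin (m + 1) → Matrix (Fin p) (Fin s) ℝ)
    (V : Matrix (Fin n) (Fin (m + 1) × Fin s) ℝ)
    (G : Matrix (Fin (m + 1) × Fin s) (Fin (m + 1) × Fin s) ℝ)
    (hG : IsUnit G)
    (T : Matrix (Fin n) (Fin (m + 1) × Fin s) ℝ)
    (hT : T = Matrix.of fun i js =>
      ((σ js.1 • (1 : Matrix (Fin n) (Fin n) ℝ) - A)⁻¹ * B * R js.1) i js.2)
    (hTVG : T = V * G)
    (Rcat : Matrix (Fin p) (Fin (m + 1) × Fin s) ℝ)
    (hRcat : Rcat = Matrix.of fun i js => R js.1 i js.2)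
    (Dtilde : Matrix (Fin (m + 1) × Fin s) (Fin (m + 1) × Fin s) ℝ)
    (hD : Dtilde = Matrix.diagonal fun js => σ js.1) :
    A * V = (V * G * Dtilde - B * Rcat) * G⁻¹ := by
  have hGdet : IsUnit G.det := (Matrix.isUnit_iff_isUnit_det _).mp hG
  have key : ∀ j : Fin (m + 1),
      A * ((σ j • (1 : Matrix (Fin n) (Fin n) ℝ) - A)⁻¹ * B * R j)
        = σ j • ((σ j • (1 : Matrix (Fin n) (Fin n) ℝ) - A)⁻¹ * B * R j) - B * R j := by
    intro j
    have hinv := Matrix.mul_nonsing_inv _ ((Matrix.isUnit_iff_isUnit_det _).mp (hσ j))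
    have h1 : (σ j • (1 : Matrix (Fin n) (Fin n) ℝ) - A) *
        ((σ j • (1 : Matrix (Fin n) (Fin n) ℝ) - A)⁻¹ * B * R j) = B * R j := by
      rw [← Matrix.mul_assoc, ← Matrix.mul_assoc, hinv, Matrix.one_mul]
    have h2 : σ j • ((σ j • (1 : Matrix (Fin n) (Fin n) ℝ) - A)⁻¹ * B * R j)
        - A * ((σ j • (1 : Matrix (Fin n) (Fin n) ℝ) - A)⁻¹ * B * R j) = B * R j := by
      rw [← h1, Matrix.sub_mul, Matrix.smul_mul, Matrix.one_mul]
    rw [← h2, sub_sub_cancel]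
  have hAT : A * T = T * Dtilde - B * Rcat := by
    ext i js
    have hATentry : (A * T) i js
        = (A * ((σ js.1 • (1 : Matrix (Fin n) (Fin n) ℝ) - A)⁻¹ * B * R js.1)) i js.2 := by
      simp only [Matrix.mul_apply, hT, Matrix.of_apply]
    have hBR : (B * Rcat) i js = (B * R js.1) i js.2 := by
      simp only [Matrix.mul_apply, hRcat, Matrix.of_apply]
    rw [Matrix.sub_apply, hD, Matrix.mul_diagonal, hBR, hATentry, key,
      Matrix.sub_apply, Matrix.smul_apply, hT]
    simp only [Matrix.of_apply, smul_eq_mul]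
    ring
  have hV : V = T * G⁻¹ := by
    rw [hTVG, Matrix.mul_assoc, Matrix.mul_nonsing_inv _ hGdet, Matrix.mul_one]
  calc A * V = (A * T) * G⁻¹ := by rw [hV, Matrix.mul_assoc]
    _ = (T * Dtilde - B * Rcat) * G⁻¹ := by rw [hAT]
    _ = (V * G * Dtilde - B * Rcat) * G⁻¹ := by rw [← hTVG]
end

section
/- If the projection matrices are block diagonal, 𝒱_m = Diag(V¹, V²) and 𝒲_m = Diag(W¹, W²) with 𝒲_m^T 𝒱_m = I, then the projected matrix 𝒲_m^T 𝒜 𝒱_m with 𝒜 = [[0, I_n], [-K, -D]] has the block form [[0, (W¹)^T V²], [-(W²)^T K V¹, -(W²)^T D V²]]; in particular, if (W¹)^T V² is invertible, the reduced system can be transformed into second-order form, i.e., the reduced transfer function 𝒞𝒱_m(ωI - 𝒲_m^T𝒜𝒱_m)^{-1}𝒲_m^Tℬ equals C_m(ω² S + ω D_m + K_m)^{-1}B_m for some matrices with S = ((W¹)^T V²)^{-1} appropriately inserted. -/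
open Matrix

/-- With block-diagonal projection matrices `𝒱 = Diag(V¹,V²)`, `𝒲 = Diag(W¹,W²)` and
`𝒜 = [[0, I],[-K, -D]]`, the projected matrix is
`𝒲ᵀ𝒜𝒱 = [[0, (W¹)ᵀV²], [-(W²)ᵀKV¹, -(W²)ᵀDV²]]`; moreover, if `E = (W¹)ᵀV²` is
invertible, the reduced transfer function has second-order form:
`𝒞𝒱 (ωI - 𝒲ᵀ𝒜𝒱)⁻¹ 𝒲ᵀℬ = C_m (ω² S + ω D_m + K_m)⁻¹ B_m` with `S = E⁻¹`,
`D_m = (W²)ᵀ D V² E⁻¹`, `K_m = (W²)ᵀ K V¹`, `B_m = (W²)ᵀ B`, `C_m = C V¹`. -/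
theorem structure_preserving_second_order
    (n p ms : ℕ)
    (K D : Matrix (Fin n) (Fin n) ℝ)
    (B : Matrix (Fin n) (Fin p) ℝ) (C : Matrix (Fin p) (Fin n) ℝ)
    (V1 V2 W1 W2 : Matrix (Fin n) (Fin ms) ℝ)
    (hW1V1 : W1ᵀ * V1 = 1) (hW2V2 : W2ᵀ * V2 = 1)
    (E : Matrix (Fin ms) (Fin ms) ℝ) (hE : E = W1ᵀ * V2) (hEinv : IsUnit E)
    (𝒜 : Matrix (Fin n ⊕ Fin n) (Fin n ⊕ Fin n) ℝ)
    (h𝒜 : 𝒜 = Matrix.fromBlocks 0 1 (-K) (-D))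
    (ℬ : Matrix (Fin n ⊕ Fin n) (Fin p) ℝ)
    (hℬ : ℬ = Matrix.of fun i j => Sum.elim (fun _ => (0 : ℝ)) (fun k => B k j) i)
    (𝒞 : Matrix (Fin p) (Fin n ⊕ Fin n) ℝ)
    (h𝒞 : 𝒞 = Matrix.of fun i j => Sum.elim (fun k => C i k) (fun _ => (0 : ℝ)) j)
    (𝒱 : Matrix (Fin n ⊕ Fin n) (Fin ms ⊕ Fin ms) ℝ)
    (h𝒱 : 𝒱 = Matrix.fromBlocks V1 0 0 V2)
    (𝒲 : Matrix (Fin n ⊕ Fin n) (Fin ms ⊕ Fin ms) ℝ)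
    (h𝒲 : 𝒲 = Matrix.fromBlocks W1 0 0 W2)
    (ω : ℝ)
    (hred : IsUnit (ω • (1 : Matrix (Fin ms ⊕ Fin ms) (Fin ms ⊕ Fin ms) ℝ) - 𝒲ᵀ * 𝒜 * 𝒱))
    (hso : IsUnit (ω ^ 2 • E⁻¹ + ω • (W2ᵀ * D * V2 * E⁻¹) + W2ᵀ * K * V1)) :
    𝒲ᵀ * 𝒜 * 𝒱 = Matrix.fromBlocks 0 (W1ᵀ * V2) (-(W2ᵀ * K * V1)) (-(W2ᵀ * D * V2)) ∧
      (𝒞 * 𝒱) * (ω • (1 : Matrix (Fin ms ⊕ Fin ms) (Fin ms ⊕ Fin ms) ℝ) - 𝒲ᵀ * 𝒜 * 𝒱)⁻¹ *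
          (𝒲ᵀ * ℬ) =
        (C * V1) * (ω ^ 2 • E⁻¹ + ω • (W2ᵀ * D * V2 * E⁻¹) + W2ᵀ * K * V1)⁻¹ *
          (W2ᵀ * B) := by
  have h1 : 𝒲ᵀ * 𝒜 * 𝒱 =
      Matrix.fromBlocks 0 (W1ᵀ * V2) (-(W2ᵀ * K * V1)) (-(W2ᵀ * D * V2)) := by
    rw [h𝒲, h𝒜, h𝒱, fromBlocks_transpose, transpose_zero, fromBlocks_multiply,
      fromBlocks_multiply]
    simp [Matrix.mul_assoc]
  refine ⟨h1, ?_⟩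
  set EI := E⁻¹ with hEI
  set Dm := W2ᵀ * D * V2 with hDm
  set Km := W2ᵀ * K * V1 with hKm
  set Φ := ω ^ 2 • EI + ω • (Dm * EI) + Km with hΦ
  have hEE : E * EI = 1 := Matrix.mul_nonsing_inv E ((Matrix.isUnit_iff_isUnit_det E).mp hEinv)
  have hΦΦ : Φ * Φ⁻¹ = 1 := Matrix.mul_nonsing_inv Φ ((Matrix.isUnit_iff_isUnit_det Φ).mp hso)
  set P := ω • EI + Dm * EI with hP
  have hΦP : Φ = Km + ω • P := by
    rw [hΦ, hP, smul_add, smul_smul, ← pow_two]; exact add_comm _ _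
  have hDP : (ω • (1 : Matrix (Fin ms) (Fin ms) ℝ) + Dm) * EI = P := by
    rw [add_mul, smul_mul_assoc, one_mul, hP]
  have hM : ω • (1 : Matrix (Fin ms ⊕ Fin ms) (Fin ms ⊕ Fin ms) ℝ) - 𝒲ᵀ * 𝒜 * 𝒱 =
      Matrix.fromBlocks (ω • 1) (-E) Km (ω • 1 + Dm) := by
    rw [h1, ← hE]
    ext i j
    rcases i with i | i <;> rcases j with j | j <;>
      simp [Matrix.sub_apply, Matrix.smul_apply, Matrix.one_apply]
  have b11 : (ω • (1 : Matrix (Fin ms) (Fin ms) ℝ)) * (Φ⁻¹ * P) +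
      (-E) * (ω • (EI * (Φ⁻¹ * P)) - EI) = 1 := by
    rw [smul_mul_assoc, one_mul, neg_mul, mul_sub, mul_smul_comm, ← Matrix.mul_assoc,
      hEE, one_mul]
    exact (fun X => by abel : ∀ X : Matrix (Fin ms) (Fin ms) ℝ, ω • X + -(ω • X - 1) = 1) _
  have b12 : (ω • (1 : Matrix (Fin ms) (Fin ms) ℝ)) * Φ⁻¹ + (-E) * (ω • (EI * Φ⁻¹)) = 0 := by
    rw [smul_mul_assoc, one_mul, neg_mul, mul_smul_comm, ← Matrix.mul_assoc, hEE, one_mul]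
    exact add_neg_cancel _
  have e2 : (ω • 1 + Dm) * (ω • (EI * (Φ⁻¹ * P)) - EI) = ω • (P * (Φ⁻¹ * P)) - P := by
    rw [mul_sub, mul_smul_comm, ← Matrix.mul_assoc, hDP]
  have b21 : Km * (Φ⁻¹ * P) + (ω • 1 + Dm) * (ω • (EI * (Φ⁻¹ * P)) - EI) = 0 := by
    rw [e2, ← smul_mul_assoc, ← add_sub_assoc, ← add_mul, ← hΦP, ← Matrix.mul_assoc,
      hΦΦ, one_mul, sub_self]
  have e3 : (ω • 1 + Dm) * (ω • (EI * Φ⁻¹)) = ω • (P * Φ⁻¹) := by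
    rw [mul_smul_comm, ← Matrix.mul_assoc, hDP]
  have b22 : Km * Φ⁻¹ + (ω • 1 + Dm) * (ω • (EI * Φ⁻¹)) = 1 := by
    rw [e3, ← smul_mul_assoc, ← add_mul, ← hΦP, hΦΦ]
  have hMN : Matrix.fromBlocks (ω • 1) (-E) Km (ω • 1 + Dm) *
      Matrix.fromBlocks (Φ⁻¹ * P) Φ⁻¹ (ω • (EI * (Φ⁻¹ * P)) - EI) (ω • (EI * Φ⁻¹)) = 1 := by
    rw [fromBlocks_multiply, b11, b12, b21, b22, fromBlocks_one]
  have hMinv : (ω • (1 : Matrix (Fin ms ⊕ Fin ms) (Fin ms ⊕ Fin ms) ℝ) - 𝒲ᵀ * 𝒜 * 𝒱)⁻¹ =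
      Matrix.fromBlocks (Φ⁻¹ * P) Φ⁻¹ (ω • (EI * (Φ⁻¹ * P)) - EI) (ω • (EI * Φ⁻¹)) := by
    rw [hM]; exact Matrix.inv_eq_right_inv hMN
  have hCV : 𝒞 * 𝒱 = fromCols (C * V1) 0 := by
    have hc : 𝒞 = fromCols C 0 := by
      rw [h𝒞]; ext i j; cases j <;> simp [fromCols]
    rw [hc, h𝒱, fromCols_mul_fromBlocks]
    simp
  have hWB : 𝒲ᵀ * ℬ = fromRows 0 (W2ᵀ * B) := by
    have hb : ℬ = fromRows 0 B := by
      rw [hℬ]; ext i j; cases i <;> simp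
    rw [hb, h𝒲, fromBlocks_transpose, transpose_zero, fromBlocks_mul_fromRows]
    simp
  rw [hCV, hMinv, hWB, fromCols_mul_fromBlocks, fromCols_mul_fromRows]
  simp [Matrix.mul_assoc]
end
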